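/- Contraction of actions preserves B-semantics up to ≈: if every sequence σ ∈ {ε,ic,r}* of length-bounded action sequences on transitions of a B-automaton A is replaced by the single atomic action max(σ) under the order ε < ic < r, yielding automaton A', and K is the maximum number of consecutive ic's in any transition action of A, then for corresponding runs ρ of A and ρ' of A': val(ρ') ≤ val(ρ) and val(ρ) ≤ 2K·val(ρ') + 2K. Hence ⟦A'⟧ ≈ ⟦A⟧. -/
import Mathlib


/-- Atomic counter actions of a B-automaton. -/
inductive BAct : Type
  | e   -- do nothing
  | ic  -- increment and check
  | r   -- reset
deriving DecidableEq

/-- `valAux c best l`: maximum value checked at an increment when executing the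
action sequence `l` starting from counter value `c`, with `best` already checked. -/
def valAux : ℕ → ℕ → List BAct → ℕ
  | _, best, [] => best
  | c, best, .e :: t => valAux c best t
  | c, best, .ic :: t => valAux (c + 1) (max best (c + 1)) t
  | _, best, .r :: t => valAux 0 best t

/-- Value of a sequence of atomic actions on a single counter starting at `0`:
the maximum value checked at an increment (`0` if there is none). -/
def valB (l : List BAct) : ℕ := valAux 0 0 l

/-- The order `ε < ic < r` on atomic actions. -/
def BAct.rank : BAct → ℕ
  | .e => 0
  | .ic => 1
  | .r => 2

/-- The maximal atomic action occurring in a sequence (w.r.t. `ε < ic < r`). -/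
def maxAct (l : List BAct) : BAct :=
  l.foldl (fun a b => if BAct.rank a ≤ BAct.rank b then b else a) BAct.e

/-- `f` is bounded (by a natural number) on the set `s`. -/
def BoundedOn {W : Type*} (f : W → ℕ∞) (s : Set W) : Prop :=
  ∃ N : ℕ, ∀ w ∈ s, f w < (N : ℕ∞)

/-! ### Auxiliary semantics: final counter value and max checked value -/

/-- Final counter value after executing `l` from counter `c`. -/
def cnt : ℕ → List BAct → ℕ
  | c, [] => c
  | c, .e :: t => cnt c t
  | c, .ic :: t => cnt (c + 1) t
  | _, .r :: t => cnt 0 t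

/-- Maximum value checked at an increment when executing `l` from `c` (0 if none). -/
def chk : ℕ → List BAct → ℕ
  | _, [] => 0
  | c, .e :: t => chk c t
  | c, .ic :: t => max (c + 1) (chk (c + 1) t)
  | _, .r :: t => chk 0 t

lemma valAux_eq (l : List BAct) : ∀ c best, valAux c best l = max best (chk c l) := by
  induction l with
  | nil => intro c best; simp [valAux, chk]
  | cons h t ih =>
    intro c best
    cases h <;> simp [valAux, chk, ih] <;> omega

lemma valB_eq (l : List BAct) : valB l = chk 0 l := by
  simp [valB, valAux_eq]

lemma cnt_append (l1 : List BAct) : ∀ l2 c, cnt c (l1 ++ l2) = cnt (cnt c l1) l2 := by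
  induction l1 with
  | nil => intro l2 c; simp [cnt]
  | cons h t ih => intro l2 c; cases h <;> simp [cnt, ih]

lemma chk_append (l1 : List BAct) :
    ∀ l2 c, chk c (l1 ++ l2) = max (chk c l1) (chk (cnt c l1) l2) := by
  induction l1 with
  | nil => intro l2 c; simp [cnt, chk]
  | cons h t ih => intro l2 c; cases h <;> simp [cnt, chk, ih] <;> omega

/-- Shift lemma: starting higher by `d` raises everything by at most `d`. -/
lemma shift (l : List BAct) :
    ∀ c d, cnt (c + d) l ≤ d + cnt c l ∧ chk (c + d) l ≤ d + chk c l := by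
  induction l with
  | nil => intro c d; simp only [cnt, chk]; omega
  | cons h t ih =>
    intro c d
    cases h with
    | e => simpa [cnt, chk] using ih c d
    | ic =>
      have h1 : c + d + 1 = (c + 1) + d := by omega
      have := ih (c + 1) d
      simp [cnt, chk, h1]
      omega
    | r => simp only [cnt, chk]; omega

lemma cnt_le_max (l : List BAct) : ∀ c, cnt c l ≤ max c (chk c l) := by
  induction l with
  | nil => intro c; simp [cnt, chk]
  | cons h t ih =>
    intro c
    cases h with
    | e => simpa [cnt, chk] using ih c
    | ic => have := ih (c + 1); simp [cnt, chk]; omega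
    | r => have := ih 0; simp [cnt, chk]; omega

lemma cnt_le (l : List BAct) (c : ℕ) : cnt c l ≤ c + chk 0 l := by
  have h1 := (shift l 0 c).1
  have h2 := cnt_le_max l 0
  simp at h1 h2
  omega

lemma chk_le (l : List BAct) (c : ℕ) : chk c l ≤ c + chk 0 l := by
  have := (shift l 0 c).2
  simpa using this

/-! ### Facts keyed to the shape of a sequence -/

lemma all_e (l : List BAct) (h : ∀ x ∈ l, x = .e) :
    ∀ c, cnt c l = c ∧ chk c l = 0 := by
  induction l with
  | nil => intro c; simp [cnt, chk]
  | cons a t ih =>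
    intro c
    have ha : a = BAct.e := h a (by simp)
    subst ha
    have := ih (fun x hx => h x (by simp [hx])) c
    simpa [cnt, chk] using this

lemma no_r_cnt (l : List BAct) (h : BAct.r ∉ l) : ∀ c, c ≤ cnt c l := by
  induction l with
  | nil => intro c; simp [cnt]
  | cons a t ih =>
    intro c
    have hr : a ≠ BAct.r := by rintro rfl; exact h (by simp)
    have ht : BAct.r ∉ t := fun hm => h (by simp [hm])
    cases a with
    | e => simpa [cnt] using ih ht c
    | ic => have := ih ht (c + 1); simp [cnt]; omega
    | r => exact absurd rfl hr

lemma ic_no_r (l : List BAct) (hic : BAct.ic ∈ l) (hr : BAct.r ∉ l) :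
    ∀ c, c + 1 ≤ cnt c l ∧ c + 1 ≤ chk c l := by
  induction l with
  | nil => simp at hic
  | cons a t ih =>
    intro c
    have hrt : BAct.r ∉ t := fun hm => hr (by simp [hm])
    cases a with
    | e =>
      have hict : BAct.ic ∈ t := by simpa using hic
      simpa [cnt, chk] using ih hict hrt c
    | ic =>
      have h1 := no_r_cnt t hrt (c + 1)
      simp [cnt, chk]
      omega
    | r => exact absurd (by simp) hr

lemma r_mem_cnt (l : List BAct) (h : BAct.r ∈ l) : ∀ c, cnt c l = cnt 0 l := by
  induction l with
  | nil => simp at h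
  | cons a t ih =>
    intro c
    cases a with
    | e =>
      have : BAct.r ∈ t := by simpa using h
      simp [cnt, ih this]
    | ic =>
      have : BAct.r ∈ t := by simpa using h
      simp [cnt, ih this c.succ, ih this 1]
    | r => simp [cnt]

/-! ### Characterization of `maxAct` -/

private def gmax (a b : BAct) : BAct := if BAct.rank a ≤ BAct.rank b then b else a

lemma foldl_mem (l : List BAct) : ∀ a, l.foldl gmax a = a ∨ l.foldl gmax a ∈ l := by
  induction l with
  | nil => intro a; simp
  | cons h t ih =>
    intro a
    have := ih (gmax a h)
    rcases this with h1 | h1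
    · rw [List.foldl_cons, h1]
      unfold gmax
      split <;> simp
    · right; simp [List.foldl_cons, h1]

lemma rank_le_foldl (l : List BAct) : ∀ a, a.rank ≤ (l.foldl gmax a).rank := by
  induction l with
  | nil => intro a; simp
  | cons h t ih =>
    intro a
    have h1 : a.rank ≤ (gmax a h).rank := by unfold gmax; split <;> omega
    exact le_trans h1 (ih (gmax a h))

lemma mem_rank_le_foldl (l : List BAct) :
    ∀ a, ∀ x ∈ l, x.rank ≤ (l.foldl gmax a).rank := by
  induction l with
  | nil => intro a x hx; simp at hx
  | cons h t ih =>
    intro a x hx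
    rcases List.mem_cons.mp hx with rfl | hx
    · have h1 : x.rank ≤ (gmax a x).rank := by unfold gmax; split <;> omega
      exact le_trans h1 (rank_le_foldl t (gmax a x))
    · exact ih (gmax a h) x hx

lemma maxAct_foldl (l : List BAct) : maxAct l = l.foldl gmax BAct.e := rfl

lemma rank_zero (x : BAct) (h : x.rank = 0) : x = BAct.e := by
  cases x <;> simp [BAct.rank] at h ⊢

lemma maxAct_e (l : List BAct) (h : maxAct l = BAct.e) : ∀ x ∈ l, x = BAct.e := by
  intro x hx
  have := mem_rank_le_foldl l BAct.e x hx
  rw [← maxAct_foldl, h] at this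
  cases x <;> first | rfl | simp [BAct.rank] at this

lemma maxAct_r (l : List BAct) (h : maxAct l = BAct.r) : BAct.r ∈ l := by
  have := foldl_mem l BAct.e
  rw [← maxAct_foldl, h] at this
  rcases this with h1 | h1
  · simp at h1
  · exact h1

lemma maxAct_ic (l : List BAct) (h : maxAct l = BAct.ic) :
    BAct.ic ∈ l ∧ BAct.r ∉ l := by
  constructor
  · have := foldl_mem l BAct.e
    rw [← maxAct_foldl, h] at this
    rcases this with h1 | h1
    · simp at h1
    · exact h1
  · intro hr
    have := mem_rank_le_foldl l BAct.e BAct.r hr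
    rw [← maxAct_foldl, h] at this
    simp [BAct.rank] at this

/-! ### The two main inequalities -/

lemma direction1 (ρ : List (List BAct)) :
    ∀ c' c, c' ≤ c →
      cnt c' (ρ.map maxAct) ≤ cnt c ρ.flatten ∧
      chk c' (ρ.map maxAct) ≤ chk c ρ.flatten := by
  induction ρ with
  | nil => intro c' c h; simp [cnt, chk, h]
  | cons σ t ih =>
    intro c' c h
    rw [List.map_cons, List.flatten_cons]
    rw [cnt_append, chk_append]
    rcases hma : maxAct σ with he | hic | hr
    · -- maxAct σ = e : σ is all e's
      have hσ := all_e σ (maxAct_e σ hma) c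
      have := ih c' (cnt c σ) (by omega)
      have hchk : chk c σ = 0 := hσ.2
      simp only [cnt, chk]
      constructor
      · exact this.1
      · omega
    · -- maxAct σ = ic
      obtain ⟨hicm, hrm⟩ := maxAct_ic σ hma
      have hσ := ic_no_r σ hicm hrm c
      have := ih (c' + 1) (cnt c σ) (by omega)
      simp only [cnt, chk]
      constructor
      · exact this.1
      · have := this.2
        omega
    · -- maxAct σ = r
      have := ih 0 (cnt c σ) (by omega)
      simp only [cnt, chk]
      constructor
      · exact this.1
      · omega

lemma direction2 (K : ℕ) (ρ : List (List BAct)) (hK : ∀ σ ∈ ρ, valB σ ≤ K) :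
    ∀ c c', c ≤ K * (c' + 1) →
      cnt c ρ.flatten ≤ K * (cnt c' (ρ.map maxAct) + 1) ∧
      chk c ρ.flatten ≤ 2 * K * max (chk c' (ρ.map maxAct)) c' + 2 * K := by
  induction ρ with
  | nil =>
    intro c c' h
    exact ⟨by simpa [cnt, chk] using h, by simp [cnt, chk]⟩
  | cons σ t ih =>
    intro c c' h
    have hσK : chk 0 σ ≤ K := by
      have := hK σ (by simp)
      rwa [valB_eq] at this
    have hKt : ∀ σ' ∈ t, valB σ' ≤ K := fun σ' h' => hK σ' (by simp [h'])
    have hcntσ : cnt c σ ≤ c + K := le_trans (cnt_le σ c) (by omega)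
    have hchkσ : chk c σ ≤ c + K := le_trans (chk_le σ c) (by omega)
    rw [List.map_cons, List.flatten_cons, cnt_append, chk_append]
    rcases hma : maxAct σ with he | hic | hr
    · -- e block
      have hσ := all_e σ (maxAct_e σ hma) c
      obtain ⟨ihc, ihk⟩ := ih hKt c c' h
      simp only [cnt, chk]
      rw [hσ.1, hσ.2]
      exact ⟨ihc, by omega⟩
    · -- ic block
      have hc2 : cnt c σ ≤ K * ((c' + 1) + 1) := by nlinarith
      obtain ⟨ihc, ihk⟩ := ih hKt (cnt c σ) (c' + 1) hc2
      simp only [cnt, chk]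
      constructor
      · exact ihc
      · have h1 : chk c σ ≤ 2 * K * max (max (c' + 1) (chk (c' + 1) (t.map maxAct))) c' + 2 * K := by
          have : chk c σ ≤ K * c' + 2 * K := by nlinarith
          have h2 : c' + 1 ≤ max (max (c' + 1) (chk (c' + 1) (t.map maxAct))) c' := by omega
          nlinarith
        have h3 : max (chk (c' + 1) (t.map maxAct)) (c' + 1) ≤
            max (max (c' + 1) (chk (c' + 1) (t.map maxAct))) c' := by omega
        have h4 : 2 * K * max (chk (c' + 1) (t.map maxAct)) (c' + 1) ≤
            2 * K * max (max (c' + 1) (chk (c' + 1) (t.map maxAct))) c' :=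
          Nat.mul_le_mul_left _ h3
        omega
    · -- r block
      have hrm := maxAct_r σ hma
      have hcnt0 : cnt c σ ≤ K := by
        rw [r_mem_cnt σ hrm c]
        have := cnt_le σ 0
        omega
      obtain ⟨ihc, ihk⟩ := ih hKt (cnt c σ) 0 (by omega)
      simp only [cnt, chk]
      constructor
      · exact ihc
      · have h1 : chk c σ ≤ 2 * K * max (chk 0 (t.map maxAct)) c' + 2 * K := by
          have hc' : c' ≤ max (chk 0 (t.map maxAct)) c' := by omega
          have : chk c σ ≤ K * c' + 2 * K := by nlinarith
          nlinarith
        have h3 : max (chk 0 (t.map maxAct)) 0 ≤ max (chk 0 (t.map maxAct)) c' := by omega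
        have h4 : 2 * K * max (chk 0 (t.map maxAct)) 0 ≤
            2 * K * max (chk 0 (t.map maxAct)) c' := Nat.mul_le_mul_left _ h3
        omega

/-- contraction of actions.  If each transition of a run carries
an action sequence `σ` with `valB σ ≤ K` and each sequence is replaced by its
maximal atomic action, then for corresponding runs `ρ` (a list of action
sequences, whose value is that of their concatenation) and `ρ'` (its
contraction) one has `val(ρ') ≤ val(ρ)` and `val(ρ) ≤ 2K·val(ρ') + 2K`.
Consequently, functions related pointwise by these inequalities are bounded on
the same sets, i.e. `⟦A'⟧ ≈ ⟦A⟧`. -/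
theorem contraction_of_actions (K : ℕ) :
    (∀ ρ : List (List BAct), (∀ σ ∈ ρ, valB σ ≤ K) →
      valB (ρ.map maxAct) ≤ valB ρ.flatten ∧
      valB ρ.flatten ≤ 2 * K * valB (ρ.map maxAct) + 2 * K) ∧
    (∀ (W : Type) (F F' : W → ℕ∞),
      (∀ w, F' w ≤ F w ∧ F w ≤ 2 * K * F' w + 2 * K) →
      ∀ s : Set W, BoundedOn F s ↔ BoundedOn F' s) := by
  constructor
  · intro ρ hρ
    simp only [valB_eq]
    constructor
    · exact (direction1 ρ 0 0 le_rfl).2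
    · have := (direction2 K ρ hρ 0 0 (by omega)).2
      simpa using this
  · intro W F F' h s
    constructor
    · rintro ⟨N, hN⟩
      exact ⟨N, fun w hw => lt_of_le_of_lt (h w).1 (hN w hw)⟩
    · rintro ⟨N, hN⟩
      refine ⟨2 * K * N + 2 * K + 1, fun w hw => ?_⟩
      have h1 := (h w).2
      have h2 := hN w hw
      have hne : F' w ≠ ⊤ := ne_top_of_lt h2
      lift F' w to ℕ using hne with n hn
      have hnN : n < N := by exact_mod_cast h2
      have hmul : 2 * K * n + 2 * K < 2 * K * N + 2 * K + 1 := by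
        have : 2 * K * n ≤ 2 * K * N := Nat.mul_le_mul le_rfl hnN.le
        omega
      calc F w ≤ 2 * K * (n : ℕ∞) + 2 * K := h1
        _ = ((2 * K * n + 2 * K : ℕ) : ℕ∞) := by push_cast; ring
        _ < ((2 * K * N + 2 * K + 1 : ℕ) : ℕ∞) := by exact_mod_cast hmul
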